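/- arXiv:1809.06651 — 3 statements merged into one kernel-verified Lean document; each statement's English description precedes it below -/
import Mathlib

section
/- Let G be a topological group, X a topological space with a right G-action, and σ = (σ_1, …, σ_n) ∈ G^n an n-tuple of pairwise commuting elements, viewed as constant maps. Set L_σG = {γ ∈ C(ℝ^n, G) : γ(s + e_i) = σ_i^{-1} γ(s) σ_i for all i, s} and 𝓛_σX = {δ ∈ C(ℝ^n, X) : δ(s + e_i) = δ(s)·σ_i for all i, s}. Then: (a) the multiplication (γ, t)·(γ', t') := (s ↦ γ(s) γ'(s − t), t + t') makes L_σG × ℝ^n into a group L_σG ⋊ ℝ^n; (b) each element (σ̄_i, −e_i), where σ̄_i is the constant map with value σ_i, lies in the center of L_σG ⋊ ℝ^n; (c) the formula δ·(γ, t) := (s ↦ δ(s + t)·γ(s + t)) defines a right action of L_σG ⋊ ℝ^n on 𝓛_σX; and (d) each (σ̄_i, −e_i) acts trivially, so the action descends to the quotient of L_σG ⋊ ℝ^n by the central subgroup generated by the (σ̄_i, −e_i). -/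
section

variable {G : Type*} [Group G] [TopologicalSpace G] [IsTopologicalGroup G]
variable {X : Type*} [TopologicalSpace X] {n : ℕ}

/-- Translation `s ↦ s + t` of `ℝⁿ`, as a continuous map. -/
def transMap (n : ℕ) (t : Fin n → ℝ) : C(Fin n → ℝ, Fin n → ℝ) :=
  ⟨fun s => s + t, by continuity⟩

/-- The multiplication `(γ, t)·(γ', t') := (s ↦ γ(s)γ'(s − t), t + t')` on
`C(ℝⁿ, G) × ℝⁿ` (restricting to the semidirect product `L_σG ⋊ ℝⁿ`). -/
def twistMul (p q : C(Fin n → ℝ, G) × (Fin n → ℝ)) : C(Fin n → ℝ, G) × (Fin n → ℝ) :=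
  (p.1 * q.1.comp (transMap n (-p.2)), p.2 + q.2)

/-- The inverse `(γ, t)⁻¹ := (s ↦ γ(s + t)⁻¹, −t)`. -/
def twistInv (p : C(Fin n → ℝ, G) × (Fin n → ℝ)) : C(Fin n → ℝ, G) × (Fin n → ℝ) :=
  ((p.1.comp (transMap n p.2))⁻¹, -p.2)

/-- The right action `δ·(γ, t) := (s ↦ δ(s + t)·γ(s + t))`, where `act : X × G → X` is a
(continuous) right `G`-action on `X`. -/
def twistSmul (act : C(X × G, X)) (δ : C(Fin n → ℝ, X))
    (p : C(Fin n → ℝ, G) × (Fin n → ℝ)) : C(Fin n → ℝ, X) :=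
  act.comp ((δ.comp (transMap n p.2)).prodMk (p.1.comp (transMap n p.2)))

/-- The twisted loop group `L_σG`, for `σ` a tuple of elements of `G` viewed as constant
maps. -/
def LsG (σ : Fin n → G) : Set C(Fin n → ℝ, G) :=
  {γ | ∀ (i : Fin n) (s : Fin n → ℝ), γ (s + Pi.single i 1) = (σ i)⁻¹ * γ s * σ i}

/-- The twisted loop space `𝓛_σX = {δ ∈ C(ℝⁿ, X) : δ(s + eᵢ) = δ(s)·σᵢ}`. -/
def LsX (act : C(X × G, X)) (σ : Fin n → G) : Set C(Fin n → ℝ, X) :=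
  {δ | ∀ (i : Fin n) (s : Fin n → ℝ), δ (s + Pi.single i 1) = act (δ s, σ i)}

/-- The relation identifying `p` with `(σ̄ᵢ, −eᵢ)·p`; the quotient of `L_σG ⋊ ℝⁿ` by the
central subgroup generated by the `(σ̄ᵢ, −eᵢ)` is the quotient by (the equivalence relation
generated by) this relation. -/
def genRel (σ : Fin n → G) (p q : C(Fin n → ℝ, G) × (Fin n → ℝ)) : Prop :=
  ∃ i : Fin n,
    q = twistMul (ContinuousMap.const (Fin n → ℝ) (σ i), -(Pi.single i 1)) p

end

section Aux
variable {G : Type*} [Group G] [TopologicalSpace G] [IsTopologicalGroup G]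
variable {X : Type*} [TopologicalSpace X] {n : ℕ}

@[simp] lemma transMap_apply (t s : Fin n → ℝ) : transMap n t s = s + t := rfl

@[simp] lemma twistMul_fst_apply (p q : C(Fin n → ℝ, G) × (Fin n → ℝ)) (s : Fin n → ℝ) :
    (twistMul p q).1 s = p.1 s * q.1 (s + -p.2) := rfl

@[simp] lemma twistMul_snd (p q : C(Fin n → ℝ, G) × (Fin n → ℝ)) :
    (twistMul p q).2 = p.2 + q.2 := rfl

@[simp] lemma twistInv_fst_apply (p : C(Fin n → ℝ, G) × (Fin n → ℝ)) (s : Fin n → ℝ) :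
    (twistInv p).1 s = (p.1 (s + p.2))⁻¹ := rfl

@[simp] lemma twistInv_snd (p : C(Fin n → ℝ, G) × (Fin n → ℝ)) :
    (twistInv p).2 = -p.2 := rfl

@[simp] lemma twistSmul_apply (act : C(X × G, X)) (δ : C(Fin n → ℝ, X))
    (p : C(Fin n → ℝ, G) × (Fin n → ℝ)) (s : Fin n → ℝ) :
    twistSmul act δ p s = act (δ (s + p.2), p.1 (s + p.2)) := rfl

end Aux

section Aux2
variable {G : Type*} [Group G] [TopologicalSpace G] [IsTopologicalGroup G]
variable {X : Type*} [TopologicalSpace X] {n : ℕ}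

lemma key_compat (act : C(X × G, X))
    (hact_mul : ∀ (x : X) (g g' : G), act (x, g * g') = act (act (x, g), g'))
    (δ : C(Fin n → ℝ, X)) (p q : C(Fin n → ℝ, G) × (Fin n → ℝ)) :
    twistSmul act (twistSmul act δ p) q = twistSmul act δ (twistMul p q) := by
  ext s
  simp only [twistSmul_apply, twistMul_fst_apply, twistMul_snd]
  have h1 : s + (p.2 + q.2) = s + q.2 + p.2 := by abel
  have h2 : s + (p.2 + q.2) + -p.2 = s + q.2 := by abel
  rw [hact_mul, h2, h1]

lemma key_triv (act : C(X × G, X)) (σ : Fin n → G)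
    (δ : C(Fin n → ℝ, X)) (hδ : δ ∈ LsX act σ) (i : Fin n) :
    twistSmul act δ (ContinuousMap.const (Fin n → ℝ) (σ i), -(Pi.single i 1)) = δ := by
  ext s
  simp only [twistSmul_apply, ContinuousMap.const_apply]
  rw [← hδ i]
  congr 1
  abel

end Aux2

/-- (a) `(γ, t)·(γ', t') := (s ↦ γ(s)γ'(s − t), t + t')` makes `L_σG × ℝⁿ` into a group
`L_σG ⋊ ℝⁿ`; (b) each `(σ̄ᵢ, −eᵢ)` is central in it; (c) `δ·(γ, t) := (s ↦ δ(s + t)·γ(s + t))`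
is a right action of `L_σG ⋊ ℝⁿ` on `𝓛_σX`; (d) each `(σ̄ᵢ, −eᵢ)` acts trivially, so the
action descends to the quotient by the central subgroup generated by the `(σ̄ᵢ, −eᵢ)`. -/
theorem statement3 (G : Type*) [Group G] [TopologicalSpace G] [IsTopologicalGroup G]
    (X : Type*) [TopologicalSpace X] (n : ℕ)
    (act : C(X × G, X))
    (hact_one : ∀ x : X, act (x, 1) = x)
    (hact_mul : ∀ (x : X) (g g' : G), act (x, g * g') = act (act (x, g), g'))
    (σ : Fin n → G) (hc : ∀ i j, Commute (σ i) (σ j)) :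
    -- (a) group structure on L_σG × ℝⁿ
    (∀ p q : C(Fin n → ℝ, G) × (Fin n → ℝ), p.1 ∈ LsG σ → q.1 ∈ LsG σ →
      (twistMul p q).1 ∈ LsG σ) ∧
    (∀ p q r : C(Fin n → ℝ, G) × (Fin n → ℝ),
      twistMul (twistMul p q) r = twistMul p (twistMul q r)) ∧
    ((1 : C(Fin n → ℝ, G)) ∈ LsG σ) ∧
    (∀ p : C(Fin n → ℝ, G) × (Fin n → ℝ),
      twistMul (1, 0) p = p ∧ twistMul p (1, 0) = p) ∧
    (∀ p : C(Fin n → ℝ, G) × (Fin n → ℝ), p.1 ∈ LsG σ → (twistInv p).1 ∈ LsG σ) ∧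
    (∀ p : C(Fin n → ℝ, G) × (Fin n → ℝ),
      twistMul p (twistInv p) = (1, 0) ∧ twistMul (twistInv p) p = (1, 0)) ∧
    -- (b) the elements (σ̄ᵢ, −eᵢ) belong to L_σG × ℝⁿ and are central in it
    (∀ i : Fin n, (ContinuousMap.const (Fin n → ℝ) (σ i) : C(Fin n → ℝ, G)) ∈ LsG σ) ∧
    (∀ (i : Fin n) (p : C(Fin n → ℝ, G) × (Fin n → ℝ)), p.1 ∈ LsG σ →
      twistMul (ContinuousMap.const (Fin n → ℝ) (σ i), -(Pi.single i 1)) p =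
        twistMul p (ContinuousMap.const (Fin n → ℝ) (σ i), -(Pi.single i 1))) ∧
    -- (c) right action on 𝓛_σX
    (∀ δ ∈ LsX act σ, ∀ p : C(Fin n → ℝ, G) × (Fin n → ℝ), p.1 ∈ LsG σ →
      twistSmul act δ p ∈ LsX act σ) ∧
    (∀ δ : C(Fin n → ℝ, X), twistSmul act δ (1, 0) = δ) ∧
    (∀ (δ : C(Fin n → ℝ, X)) (p q : C(Fin n → ℝ, G) × (Fin n → ℝ)),
      twistSmul act (twistSmul act δ p) q = twistSmul act δ (twistMul p q)) ∧
    -- (d) the (σ̄ᵢ, −eᵢ) act trivially, so the action descends to the quotient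
    (∀ δ ∈ LsX act σ, ∀ i : Fin n,
      twistSmul act δ (ContinuousMap.const (Fin n → ℝ) (σ i), -(Pi.single i 1)) = δ) ∧
    (∀ δ ∈ LsX act σ,
      ∃ F : Quot (genRel σ) → C(Fin n → ℝ, X),
        ∀ p : C(Fin n → ℝ, G) × (Fin n → ℝ),
          F (Quot.mk (genRel σ) p) = twistSmul act δ p) := by
  refine ⟨?_, ?_, ?_, ?_, ?_, ?_, ?_, ?_, ?_, ?_, key_compat act hact_mul, key_triv act σ, ?_⟩
  · -- closure under multiplication
    intro p q hp hq
    simp only [LsG, Set.mem_setOf_eq] at *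
    intro i s
    have h1 : s + Pi.single i 1 + -p.2 = s + -p.2 + Pi.single i 1 := by abel
    rw [twistMul_fst_apply, twistMul_fst_apply, hp i s, h1, hq i]
    group
  · -- associativity
    intro p q r
    refine Prod.ext (ContinuousMap.ext fun s => ?_) (add_assoc _ _ _)
    simp only [twistMul_fst_apply, twistMul_snd]
    have h1 : s + -(p.2 + q.2) = s + -p.2 + -q.2 := by abel
    rw [h1, mul_assoc]
  · -- one ∈ LsG
    intro i s
    simp
  · -- identity laws
    intro p
    constructor <;>
      refine Prod.ext (ContinuousMap.ext fun s => ?_) (by simp)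
    · simp
    · simp
  · -- closure under inverse
    intro p hp
    simp only [LsG, Set.mem_setOf_eq] at *
    intro i s
    have h1 : s + Pi.single i 1 + p.2 = s + p.2 + Pi.single i 1 := by abel
    rw [twistInv_fst_apply, twistInv_fst_apply, h1, hp i]
    group
  · -- inverse laws
    intro p
    constructor <;>
      refine Prod.ext (ContinuousMap.ext fun s => ?_) (by simp)
    · have h1 : s + -p.2 + p.2 = s := by abel
      simp [h1]
    · have h1 : s + p.2 + -p.2 = s := by abel
      simp [h1]
  · -- constants belong to LsG
    intro i j s
    simp [((hc j i).inv_left).eq, mul_assoc]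
  · -- centrality
    intro i p hp
    refine Prod.ext (ContinuousMap.ext fun s => ?_) (add_comm _ _)
    simp only [twistMul_fst_apply, ContinuousMap.const_apply, neg_neg]
    rw [hp i s]
    group
  · -- action preserves LsX
    intro δ hδ p hp i s
    simp only [twistSmul_apply]
    have h1 : s + Pi.single i 1 + p.2 = s + p.2 + Pi.single i 1 := by abel
    rw [h1, hδ i, hp i, ← hact_mul, ← hact_mul]
    have h2 : σ i * ((σ i)⁻¹ * p.1 (s + p.2) * σ i) = p.1 (s + p.2) * σ i := by group
    rw [h2]
  · -- identity acts trivially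
    intro δ
    ext s
    simp [hact_one]
  · -- descent to the quotient
    intro δ hδ
    refine ⟨Quot.lift (twistSmul act δ) ?_, fun p => rfl⟩
    rintro p q ⟨i, rfl⟩
    rw [← key_compat act hact_mul, key_triv act σ δ hδ i]
end

section
/- Let G and H be groups, σ = (σ_1, …, σ_n) ∈ G^n and τ = (τ_1, …, τ_n) ∈ H^n each n-tuples of pairwise commuting elements of finite order, and let (σ, τ) := ((σ_1, τ_1), …, (σ_n, τ_n)) ∈ (G × H)^n, which is again an n-tuple of pairwise commuting elements of finite order. Then C_{G×H}((σ, τ)) = C_G(σ) × C_H(τ), and the assignment [(g, h), t] ↦ ([g, t], [h, t]) is a well-defined injective group homomorphism Λ_{G×H}((σ, τ)) → Λ_G(σ) × Λ_H(τ) whose image is exactly the fibered product Λ_G(σ) ×_{𝕋^n} Λ_H(τ) = {(a, b) : π_σ(a) = π_τ(b)}, where π_σ : Λ_G(σ) → 𝕋^n and π_τ : Λ_H(τ) → 𝕋^n are the projections [g, t] ↦ t mod ℤ^n. In particular Λ_{G×H}((σ, τ)) ≅ Λ_G(σ) ×_{𝕋^n} Λ_H(τ). -/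
variable {G : Type*} [Group G] {n : ℕ}

/-- `C_G(σ) = ⋂ᵢ C_G(σᵢ)`, the centralizer of the tuple `σ`. -/
def Cgrp (σ : Fin n → G) : Subgroup G := Subgroup.centralizer (Set.range σ)

lemma sigma_mem_Cgrp (σ : Fin n → G) (hc : ∀ i j, Commute (σ i) (σ j)) (i : Fin n) :
    σ i ∈ Cgrp σ := by
  rw [Cgrp, Subgroup.mem_centralizer_iff]
  rintro h ⟨j, rfl⟩
  exact (hc j i).eq

/-- The direct product group `C_G(σ) × ℝⁿ`. -/
abbrev PGrp (σ : Fin n → G) := ↥(Cgrp σ) × Multiplicative (Fin n → ℝ)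

/-- The generator `(σᵢ, -eᵢ)` of `N_σ`. -/
def lamGen (σ : Fin n → G) (hc : ∀ i j, Commute (σ i) (σ j)) (i : Fin n) : PGrp σ :=
  (⟨σ i, sigma_mem_Cgrp σ hc i⟩, Multiplicative.ofAdd (-(Pi.single i 1)))

/-- The subgroup `N_σ` generated by the `(σᵢ, -eᵢ)`. -/
def NSub (σ : Fin n → G) (hc : ∀ i j, Commute (σ i) (σ j)) : Subgroup (PGrp σ) :=
  Subgroup.closure (Set.range (lamGen σ hc))

lemma lamGen_mem_center (σ : Fin n → G) (hc : ∀ i j, Commute (σ i) (σ j)) (i : Fin n) :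
    lamGen σ hc i ∈ Subgroup.center (PGrp σ) := by
  rw [Subgroup.mem_center_iff]
  intro g
  have h := Subgroup.mem_centralizer_iff.mp g.1.2 (σ i) ⟨i, rfl⟩
  apply Prod.ext
  · apply Subtype.ext
    simpa [lamGen] using h.symm
  · exact mul_comm _ _

lemma mem_closure_range_comm {A : Type*} [CommGroup A] {k : ℕ} (f : Fin k → A) (x : A) :
    x ∈ Subgroup.closure (Set.range f) ↔ ∃ m : Fin k → ℤ, x = ∏ i, f i ^ m i := by
  constructor
  · intro hx
    induction hx using Subgroup.closure_induction with
    | mem y hy =>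
      obtain ⟨i, rfl⟩ := hy
      refine ⟨Pi.single i 1, ?_⟩
      rw [Finset.prod_eq_single i (fun j _ hj => by simp [Pi.single_eq_of_ne hj])
        (by simp)]
      simp
    | one => exact ⟨0, by simp⟩
    | mul a b _ _ ha hb =>
      obtain ⟨m, rfl⟩ := ha
      obtain ⟨m', rfl⟩ := hb
      exact ⟨m + m', by rw [← Finset.prod_mul_distrib]; simp [zpow_add]⟩
    | inv a _ ha =>
      obtain ⟨m, rfl⟩ := ha
      exact ⟨-m, by rw [← Finset.prod_inv_distrib]; simp⟩
  · rintro ⟨m, rfl⟩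
    exact Subgroup.prod_mem _ fun i _ =>
      Subgroup.zpow_mem _ (Subgroup.subset_closure (Set.mem_range_self i)) _

lemma lamGen_commute (σ : Fin n → G) (hc : ∀ i j, Commute (σ i) (σ j)) (i : Fin n)
    (x : PGrp σ) : Commute (lamGen σ hc i) x :=
  (Subgroup.mem_center_iff.mp (lamGen_mem_center σ hc i) x).symm

def cGen (σ : Fin n → G) (hc : ∀ i j, Commute (σ i) (σ j)) (i : Fin n) :
    Subgroup.center (PGrp σ) := ⟨lamGen σ hc i, lamGen_mem_center σ hc i⟩

/-- `∏ i, lamGen i ^ m i` as a noncommutative product. -/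
def nProd (σ : Fin n → G) (hc : ∀ i j, Commute (σ i) (σ j)) (m : Fin n → ℤ) : PGrp σ :=
  Finset.univ.noncommProd (fun i => lamGen σ hc i ^ m i)
    (id fun i _ j _ _ => Commute.zpow_zpow (lamGen_commute σ hc i _) _ _)

open scoped IsMulCommutative in
lemma subtype_prod_cGen (σ : Fin n → G) (hc : ∀ i j, Commute (σ i) (σ j)) (m : Fin n → ℤ) :
    ((∏ i, cGen σ hc i ^ m i : Subgroup.center (PGrp σ)) : PGrp σ) = nProd σ hc m := by
  have h1 : ((∏ i, cGen σ hc i ^ m i : Subgroup.center (PGrp σ)) : PGrp σ)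
      = (Subgroup.center (PGrp σ)).subtype (∏ i, cGen σ hc i ^ m i) := rfl
  rw [h1, ← Finset.noncommProd_eq_prod]
  erw [Finset.map_noncommProd]
  rw [nProd]
  apply Finset.noncommProd_congr rfl
  intro i _
  simp [cGen]

open scoped IsMulCommutative in
lemma mem_NSub_iff (σ : Fin n → G) (hc : ∀ i j, Commute (σ i) (σ j)) (x : PGrp σ) :
    x ∈ NSub σ hc ↔ ∃ m : Fin n → ℤ, x = nProd σ hc m := by
  have hmap : NSub σ hc =
      (Subgroup.closure (Set.range (cGen σ hc))).map (Subgroup.center (PGrp σ)).subtype := by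
    rw [MonoidHom.map_closure, NSub]
    congr 1
    rw [← Set.range_comp]
    rfl
  rw [hmap]
  constructor
  · rintro ⟨z, hz, rfl⟩
    obtain ⟨m, rfl⟩ := (mem_closure_range_comm _ _).mp hz
    exact ⟨m, subtype_prod_cGen σ hc m⟩
  · rintro ⟨m, rfl⟩
    exact ⟨∏ i, cGen σ hc i ^ m i, (mem_closure_range_comm _ _).mpr ⟨m, rfl⟩,
      subtype_prod_cGen σ hc m⟩

/-- `∏ i, σ i ^ m i` in `G`. -/
def gProd (σ : Fin n → G) (hc : ∀ i j, Commute (σ i) (σ j)) (m : Fin n → ℤ) : G :=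
  Finset.univ.noncommProd (fun i => σ i ^ m i)
    (id fun i _ j _ _ => Commute.zpow_zpow (hc i j) _ _)

lemma gProd_mem (σ : Fin n → G) (hc : ∀ i j, Commute (σ i) (σ j)) (m : Fin n → ℤ) :
    gProd σ hc m ∈ Cgrp σ :=
  Subgroup.noncommProd_mem _ _ fun i _ => Subgroup.zpow_mem _ (sigma_mem_Cgrp σ hc i) _

lemma nProd_eq (σ : Fin n → G) (hc : ∀ i j, Commute (σ i) (σ j)) (m : Fin n → ℤ) :
    nProd σ hc m = ((⟨gProd σ hc m, gProd_mem σ hc m⟩ : ↥(Cgrp σ)),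
      Multiplicative.ofAdd (fun j => -(m j : ℝ))) := by
  apply Prod.ext
  · apply Subtype.ext
    have h1 : ((nProd σ hc m).1 : G)
        = ((Cgrp σ).subtype.comp (MonoidHom.fst _ _)) (nProd σ hc m) := rfl
    rw [h1, nProd, Finset.map_noncommProd]
    show Finset.univ.noncommProd _ _ = gProd σ hc m
    rw [gProd]
    apply Finset.noncommProd_congr rfl
    intro i _
    simp [lamGen]
  · have h1 : (nProd σ hc m).2 = (MonoidHom.snd _ _) (nProd σ hc m) := rfl
    rw [h1, nProd, Finset.map_noncommProd, Finset.noncommProd_eq_prod]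
    have h2 : ∀ i : Fin n,
        ((MonoidHom.snd (↥(Cgrp σ)) (Multiplicative (Fin n → ℝ)))
          ((fun i => lamGen σ hc i ^ m i) i))
        = Multiplicative.ofAdd (m i • (-(Pi.single i (1:ℝ)))) := by
      intro i
      rw [ofAdd_zsmul]
      rfl
  
    simp_rw [h2]
    rw [← ofAdd_sum]
    show Multiplicative.ofAdd _ = Multiplicative.ofAdd _
    congr 1
    funext j
    rw [Finset.sum_apply]
    rw [Finset.sum_eq_single j (fun i _ hij => by
      simp [Pi.single_eq_of_ne (Ne.symm hij)]) (by simp)]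
    simp

instance NSub_normal {σ : Fin n → G} {hc : ∀ i j, Commute (σ i) (σ j)} : (NSub σ hc).Normal := by
  constructor
  intro x hx g
  have hle : NSub σ hc ≤ Subgroup.center (PGrp σ) := by
    rw [NSub]
    refine (Subgroup.closure_le _).mpr ?_
    rintro y ⟨i, rfl⟩
    exact lamGen_mem_center σ hc i
  have h := Subgroup.mem_center_iff.mp (hle hx) g
  rw [h]
  simpa using hx

/-- `Λ_G(σ) := (C_G(σ) × ℝⁿ)/N_σ`. -/
abbrev Lam (σ : Fin n → G) (hc : ∀ i j, Commute (σ i) (σ j)) := PGrp σ ⧸ NSub σ hc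

variable {H : Type*} [Group H]

lemma comm_prodTuple (σ : Fin n → G) (τ : Fin n → H)
    (hcσ : ∀ i j, Commute (σ i) (σ j)) (hcτ : ∀ i j, Commute (τ i) (τ j)) :
    ∀ i j, Commute ((fun i => (σ i, τ i)) i) ((fun i => (σ i, τ i)) j) := by
  intro i j
  exact Prod.ext ((hcσ i j).eq) ((hcτ i j).eq)

lemma mem_Cgrp_fst (σ : Fin n → G) (τ : Fin n → H) {p : G × H}
    (hp : p ∈ Cgrp (fun i => (σ i, τ i))) : p.1 ∈ Cgrp σ := by
  rw [Cgrp, Subgroup.mem_centralizer_iff]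
  rintro y ⟨j, rfl⟩
  exact congrArg Prod.fst (Subgroup.mem_centralizer_iff.mp hp (σ j, τ j) ⟨j, rfl⟩)

lemma mem_Cgrp_snd (σ : Fin n → G) (τ : Fin n → H) {p : G × H}
    (hp : p ∈ Cgrp (fun i => (σ i, τ i))) : p.2 ∈ Cgrp τ := by
  rw [Cgrp, Subgroup.mem_centralizer_iff]
  rintro y ⟨j, rfl⟩
  exact congrArg Prod.snd (Subgroup.mem_centralizer_iff.mp hp (σ j, τ j) ⟨j, rfl⟩)

lemma mem_Cgrp_pair (σ : Fin n → G) (τ : Fin n → H) {a : G} {b : H}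
    (ha : a ∈ Cgrp σ) (hb : b ∈ Cgrp τ) : (a, b) ∈ Cgrp (fun i => (σ i, τ i)) := by
  rw [Cgrp, Subgroup.mem_centralizer_iff]
  rintro y ⟨j, rfl⟩
  exact Prod.ext (Subgroup.mem_centralizer_iff.mp ha (σ j) ⟨j, rfl⟩)
    (Subgroup.mem_centralizer_iff.mp hb (τ j) ⟨j, rfl⟩)

/-- Projection `PGrp (σ,τ) →* PGrp σ`. -/
def toFstP (σ : Fin n → G) (τ : Fin n → H) : PGrp (fun i => (σ i, τ i)) →* PGrp σ where
  toFun x := ((⟨(x.1 : G × H).1, mem_Cgrp_fst σ τ x.1.2⟩ : ↥(Cgrp σ)), x.2)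
  map_one' := rfl
  map_mul' _ _ := rfl

def toSndP (σ : Fin n → G) (τ : Fin n → H) : PGrp (fun i => (σ i, τ i)) →* PGrp τ where
  toFun x := ((⟨(x.1 : G × H).2, mem_Cgrp_snd σ τ x.1.2⟩ : ↥(Cgrp τ)), x.2)
  map_one' := rfl
  map_mul' _ _ := rfl

/-- The homomorphism `PGrp (σ,τ) →* Lam σ × Lam τ`. -/
def Phi0 (σ : Fin n → G) (τ : Fin n → H)
    (hcσ : ∀ i j, Commute (σ i) (σ j)) (hcτ : ∀ i j, Commute (τ i) (τ j)) :
    PGrp (fun i => (σ i, τ i)) →* Lam σ hcσ × Lam τ hcτ :=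
  ((QuotientGroup.mk' (NSub σ hcσ)).comp (toFstP σ τ)).prod
    ((QuotientGroup.mk' (NSub τ hcτ)).comp (toSndP σ τ))

lemma Phi0_ker (σ : Fin n → G) (τ : Fin n → H)
    (hcσ : ∀ i j, Commute (σ i) (σ j)) (hcτ : ∀ i j, Commute (τ i) (τ j)) :
    ∀ x ∈ NSub (fun i => (σ i, τ i)) (comm_prodTuple σ τ hcσ hcτ), Phi0 σ τ hcσ hcτ x = 1 := by
  intro x hx
  have hle : NSub (fun i => (σ i, τ i)) (comm_prodTuple σ τ hcσ hcτ)
      ≤ (Phi0 σ τ hcσ hcτ).ker := by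
    rw [NSub]
    refine (Subgroup.closure_le _).mpr ?_
    rintro y ⟨i, rfl⟩
    have h1 : toFstP σ τ (lamGen _ (comm_prodTuple σ τ hcσ hcτ) i) = lamGen σ hcσ i := by
      apply Prod.ext
      · exact Subtype.ext rfl
      · rfl
    have h2 : toSndP σ τ (lamGen _ (comm_prodTuple σ τ hcσ hcτ) i) = lamGen τ hcτ i := by
      apply Prod.ext
      · exact Subtype.ext rfl
      · rfl
    rw [SetLike.mem_coe, MonoidHom.mem_ker]
    apply Prod.ext
    · show (QuotientGroup.mk' (NSub σ hcσ)) (toFstP σ τ _) = 1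
      rw [h1, QuotientGroup.mk'_apply, QuotientGroup.eq_one_iff]
      exact Subgroup.subset_closure (Set.mem_range_self i)
    · show (QuotientGroup.mk' (NSub τ hcτ)) (toSndP σ τ _) = 1
      rw [h2, QuotientGroup.mk'_apply, QuotientGroup.eq_one_iff]
      exact Subgroup.subset_closure (Set.mem_range_self i)
  exact hle hx

def PhiMap (σ : Fin n → G) (τ : Fin n → H)
    (hcσ : ∀ i j, Commute (σ i) (σ j)) (hcτ : ∀ i j, Commute (τ i) (τ j)) :
    Lam (fun i => (σ i, τ i)) (comm_prodTuple σ τ hcσ hcτ) →* Lam σ hcσ × Lam τ hcτ :=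
  QuotientGroup.lift _ (Phi0 σ τ hcσ hcτ) (Phi0_ker σ τ hcσ hcτ)

/-- `𝕋ⁿ`-projection on `PGrp`. -/
noncomputable def rho (σ : Fin n → G) : PGrp σ →* Multiplicative (Fin n → AddCircle (1 : ℝ)) :=
  (AddMonoidHom.toMultiplicative
    ((QuotientAddGroup.mk' (AddSubgroup.zmultiples (1:ℝ))).compLeft (Fin n))).comp
      (MonoidHom.snd _ _)

lemma rho_ker (σ : Fin n → G) (hc : ∀ i j, Commute (σ i) (σ j)) :
    ∀ x ∈ NSub σ hc, rho σ x = 1 := by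
  intro x hx
  have hle : NSub σ hc ≤ (rho σ).ker := by
    rw [NSub]
    refine (Subgroup.closure_le _).mpr ?_
    rintro y ⟨i, rfl⟩
    rw [SetLike.mem_coe, MonoidHom.mem_ker]
    show Multiplicative.ofAdd
      (fun j => ((-(Pi.single i (1:ℝ)) : Fin n → ℝ) j : AddCircle (1:ℝ))) = 1
    have hfun : (fun j => ((-(Pi.single i (1:ℝ)) : Fin n → ℝ) j : AddCircle (1:ℝ)))
        = (0 : Fin n → AddCircle (1:ℝ)) := by
      funext j
      rw [Pi.zero_apply]
      by_cases h : j = i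
      · subst h
        rw [Pi.neg_apply, Pi.single_eq_same]
        have h1 : (((1:ℝ) : AddCircle (1:ℝ))) = 0 := AddCircle.coe_period (1:ℝ)
        have h2 : ((-(1:ℝ) : ℝ) : AddCircle (1:ℝ)) = -(((1:ℝ) : AddCircle (1:ℝ))) := rfl
        rw [h2, h1, neg_zero]
      · simp [Pi.single_eq_of_ne h]
    rw [hfun]
    rfl
  exact hle hx

noncomputable def piMap (σ : Fin n → G) (hc : ∀ i j, Commute (σ i) (σ j)) :
    Lam σ hc →* Multiplicative (Fin n → AddCircle (1 : ℝ)) :=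
  QuotientGroup.lift _ (rho σ) (rho_ker σ hc)

lemma gProd_pair (σ : Fin n → G) (τ : Fin n → H)
    (hcσ : ∀ i j, Commute (σ i) (σ j)) (hcτ : ∀ i j, Commute (τ i) (τ j)) (m : Fin n → ℤ) :
    gProd (fun i => (σ i, τ i)) (comm_prodTuple σ τ hcσ hcτ) m
      = (gProd σ hcσ m, gProd τ hcτ m) := by
  apply Prod.ext
  · have h : (gProd (fun i => (σ i, τ i)) (comm_prodTuple σ τ hcσ hcτ) m).1
      = (MonoidHom.fst G H) (gProd (fun i => (σ i, τ i)) (comm_prodTuple σ τ hcσ hcτ) m) := rfl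
    rw [h, gProd, Finset.map_noncommProd]
    show Finset.univ.noncommProd _ _ = gProd σ hcσ m
    rw [gProd]
    exact Finset.noncommProd_congr rfl (fun i _ => rfl) _
  · have h : (gProd (fun i => (σ i, τ i)) (comm_prodTuple σ τ hcσ hcτ) m).2
      = (MonoidHom.snd G H) (gProd (fun i => (σ i, τ i)) (comm_prodTuple σ τ hcσ hcτ) m) := rfl
    rw [h, gProd, Finset.map_noncommProd]
    show Finset.univ.noncommProd _ _ = gProd τ hcτ m
    rw [gProd]
    exact Finset.noncommProd_congr rfl (fun i _ => rfl) _

/-- `C_{G×H}((σ,τ)) = C_G(σ) × C_H(τ)`, and `[(g,h),t] ↦ ([g,t],[h,t])` is a well-defined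
injective homomorphism `Λ_{G×H}((σ,τ)) → Λ_G(σ) × Λ_H(τ)` whose image is exactly the fibered
product `Λ_G(σ) ×_{𝕋ⁿ} Λ_H(τ)`; in particular `Λ_{G×H}((σ,τ)) ≅ Λ_G(σ) ×_{𝕋ⁿ} Λ_H(τ)`. -/
theorem statement12 (σ : Fin n → G) (τ : Fin n → H)
    (hcσ : ∀ i j, Commute (σ i) (σ j)) (hcτ : ∀ i j, Commute (τ i) (τ j))
    (hordσ : ∀ i, IsOfFinOrder (σ i)) (hordτ : ∀ i, IsOfFinOrder (τ i)) :
    (Cgrp (fun i => (σ i, τ i)) = (Cgrp σ).prod (Cgrp τ)) ∧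
    ∃ Φ : Lam (fun i => (σ i, τ i)) (comm_prodTuple σ τ hcσ hcτ) →* Lam σ hcσ × Lam τ hcτ,
      (∀ (p : ↥(Cgrp (fun i => (σ i, τ i)))) (t : Fin n → ℝ),
        Φ (QuotientGroup.mk (p, Multiplicative.ofAdd t)) =
          (QuotientGroup.mk ((⟨(p : G × H).1, mem_Cgrp_fst σ τ p.2⟩ : ↥(Cgrp σ)),
              Multiplicative.ofAdd t),
           QuotientGroup.mk ((⟨(p : G × H).2, mem_Cgrp_snd σ τ p.2⟩ : ↥(Cgrp τ)),
              Multiplicative.ofAdd t))) ∧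
      Function.Injective Φ ∧
      ∃ (πσ : Lam σ hcσ →* Multiplicative (Fin n → AddCircle (1 : ℝ)))
        (πτ : Lam τ hcτ →* Multiplicative (Fin n → AddCircle (1 : ℝ))),
        (∀ (g : ↥(Cgrp σ)) (t : Fin n → ℝ),
          πσ (QuotientGroup.mk (g, Multiplicative.ofAdd t)) =
            Multiplicative.ofAdd (fun i => ((t i : ℝ) : AddCircle (1 : ℝ)))) ∧
        (∀ (h : ↥(Cgrp τ)) (t : Fin n → ℝ),
          πτ (QuotientGroup.mk (h, Multiplicative.ofAdd t)) =
            Multiplicative.ofAdd (fun i => ((t i : ℝ) : AddCircle (1 : ℝ)))) ∧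
        Set.range Φ = {ab : Lam σ hcσ × Lam τ hcτ | πσ ab.1 = πτ ab.2} := by
  refine ⟨?_, PhiMap σ τ hcσ hcτ, ?_, ?_, piMap σ hcσ, piMap τ hcτ, ?_, ?_, ?_⟩
  · ext x
    rw [Subgroup.mem_prod]
    constructor
    · intro hx
      exact ⟨mem_Cgrp_fst σ τ hx, mem_Cgrp_snd σ τ hx⟩
    · rintro ⟨h1, h2⟩
      exact mem_Cgrp_pair σ τ h1 h2
  · intro p t
    rfl
  · rw [injective_iff_map_eq_one]
    intro a ha
    obtain ⟨x, rfl⟩ := QuotientGroup.mk_surjective a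
    have h1 : toFstP σ τ x ∈ NSub σ hcσ := by
      have h : (QuotientGroup.mk (toFstP σ τ x) : Lam σ hcσ) = 1 := congrArg Prod.fst ha
      exact (QuotientGroup.eq_one_iff _).mp h
    have h2 : toSndP σ τ x ∈ NSub τ hcτ := by
      have h : (QuotientGroup.mk (toSndP σ τ x) : Lam τ hcτ) = 1 := congrArg Prod.snd ha
      exact (QuotientGroup.eq_one_iff _).mp h
    obtain ⟨m, hm⟩ := (mem_NSub_iff σ hcσ _).mp h1
    obtain ⟨m', hm'⟩ := (mem_NSub_iff τ hcτ _).mp h2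
    rw [nProd_eq] at hm hm'
    have hx2 : x.2 = Multiplicative.ofAdd (fun j => -(m j : ℝ)) := congrArg Prod.snd hm
    have hx2' : x.2 = Multiplicative.ofAdd (fun j => -(m' j : ℝ)) := congrArg Prod.snd hm'
    have hmm : m' = m := by
      funext j
      have h3 : (fun j => -(m j : ℝ)) = (fun j => -(m' j : ℝ)) := by
        have := hx2.symm.trans hx2'
        exact congrArg Multiplicative.toAdd this
      have h4 : -(m j : ℝ) = -(m' j : ℝ) := congrFun h3 j
      have h5 : ((m' j : ℝ)) = ((m j : ℝ)) := (neg_injective h4).symm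
      exact_mod_cast h5
    rw [QuotientGroup.eq_one_iff, mem_NSub_iff]
    refine ⟨m, ?_⟩
    rw [nProd_eq]
    have e1 : ((x.1 : G × H).1) = gProd σ hcσ m := congrArg (fun z => ((z.1 : ↥(Cgrp σ)) : G)) hm
    have e2 : ((x.1 : G × H).2) = gProd τ hcτ m := by
      have := congrArg (fun z => ((z.1 : ↥(Cgrp τ)) : H)) hm'
      rw [hmm] at this
      exact this
    apply Prod.ext
    · apply Subtype.ext
      show (x.1 : G × H) = gProd (fun i => (σ i, τ i)) (comm_prodTuple σ τ hcσ hcτ) m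
      rw [gProd_pair σ τ hcσ hcτ m]
      exact Prod.ext e1 e2
    · exact hx2
  · intro g t
    rfl
  · intro h t
    rfl
  · ext ab
    constructor
    · rintro ⟨q, rfl⟩
      obtain ⟨x, rfl⟩ := QuotientGroup.mk_surjective q
      show piMap σ hcσ (QuotientGroup.mk (toFstP σ τ x))
        = piMap τ hcτ (QuotientGroup.mk (toSndP σ τ x))
      rfl
    · intro hab
      obtain ⟨a, b⟩ := ab
      obtain ⟨x, rfl⟩ := QuotientGroup.mk_surjective a
      obtain ⟨y, rfl⟩ := QuotientGroup.mk_surjective b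
      simp only [Set.mem_setOf_eq] at hab
      have hco : ∀ j, ((x.2.toAdd j : ℝ) : AddCircle (1:ℝ))
          = ((y.2.toAdd j : ℝ) : AddCircle (1:ℝ)) := by
        intro j
        exact congrFun (congrArg Multiplicative.toAdd hab) j
      have hex : ∀ j, ∃ k : ℤ, (k : ℝ) = y.2.toAdd j - x.2.toAdd j := by
        intro j
        have h := QuotientAddGroup.eq.mp (hco j)
        obtain ⟨k, hk⟩ := h
        refine ⟨k, ?_⟩
        have h5 : (k : ℝ) = -x.2.toAdd j + y.2.toAdd j := by simpa using hk
        linarith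
      choose m hm using hex
      have hmem : nProd τ hcτ m ∈ NSub τ hcτ := (mem_NSub_iff τ hcτ _).mpr ⟨m, rfl⟩
      have hyq : (QuotientGroup.mk (y * nProd τ hcτ m) : Lam τ hcτ) = QuotientGroup.mk y :=
        QuotientGroup.mk_mul_of_mem y hmem
      have h2 : (y * nProd τ hcτ m).2 = x.2 := by
        rw [nProd_eq]
        show y.2 * Multiplicative.ofAdd (fun j => -(m j : ℝ)) = x.2
        apply Multiplicative.toAdd.injective
        funext j
        show y.2.toAdd j + -(m j : ℝ) = x.2.toAdd j
        rw [hm j]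
        ring
      refine ⟨QuotientGroup.mk
        ((⟨((x.1 : G), ((y * nProd τ hcτ m).1 : H)),
          mem_Cgrp_pair σ τ x.1.2 (y * nProd τ hcτ m).1.2⟩, x.2)), ?_⟩
      apply Prod.ext
      · show (QuotientGroup.mk ((⟨(x.1 : G), _⟩ : ↥(Cgrp σ)), x.2) : Lam σ hcσ)
          = QuotientGroup.mk x
        congr 1
      · show (QuotientGroup.mk ((⟨((y * nProd τ hcτ m).1 : H), _⟩ : ↥(Cgrp τ)), x.2) : Lam τ hcτ)
          = QuotientGroup.mk y
        rw [← hyq]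
        congr 1
        exact Prod.ext rfl h2.symm
end

section
/- Let G be a group, H ≤ G a subgroup, X a set with a left H-action, and σ = (σ_1, …, σ_n) ∈ G^n an n-tuple of pairwise commuting elements of finite order. Let R ⊆ H^n be a set containing exactly one representative of each H-conjugacy class of n-tuples τ ∈ H^n that are G-conjugate to σ. Then there is a bijection between the fixed-point set (G ×_H X)^σ = {p ∈ G ×_H X : σ_i·p = p for all i} and the disjoint union ⨿_{τ ∈ R} C_G(τ) ×_{C_H(τ)} X^τ. -/
section

variable {G : Type*} [Group G] {n : ℕ}

/-- The relation `(g·h, x) ∼ (g, h·x)` on `G × X` defining the balanced product `G ×_H X`. -/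
def balRel (H : Subgroup G) (X : Type*) [MulAction ↥H X] :
    (G × X) → (G × X) → Prop :=
  fun p q => ∃ h : ↥H, p.1 = q.1 * (h : G) ∧ q.2 = h • p.2

/-- The balanced product `G ×_H X`. -/
def BalProd (H : Subgroup G) (X : Type*) [MulAction ↥H X] := Quot (balRel H X)

/-- The left `G`-action on `G ×_H X`, `a·[g, x] = [ag, x]`. -/
def gmul (H : Subgroup G) (X : Type*) [MulAction ↥H X] (a : G) :
    BalProd H X → BalProd H X :=
  Quot.lift (fun p => Quot.mk (balRel H X) (a * p.1, p.2)) (by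
    rintro p q ⟨h, h1, h2⟩
    apply Quot.sound
    exact ⟨h, by rw [h1, mul_assoc], h2⟩)

/-- `C_G(τ) = ⋂ᵢ C_G(τᵢ)` for a tuple `τ` of elements of the subgroup `H`. -/
def CGsub (H : Subgroup G) (τ : Fin n → ↥H) : Subgroup G :=
  Subgroup.centralizer (Set.range fun i => ((τ i : G)))

/-- The relation `(a·h, x) ∼ (a, h·x)`, `h ∈ C_H(τ)`, on `C_G(τ) × X^τ`, defining the
balanced product `C_G(τ) ×_{C_H(τ)} X^τ`. -/
def relCH (H : Subgroup G) (X : Type*) [MulAction ↥H X] (τ : Fin n → ↥H) :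
    {p : G × X // p.1 ∈ CGsub H τ ∧ ∀ i, τ i • p.2 = p.2} →
      {p : G × X // p.1 ∈ CGsub H τ ∧ ∀ i, τ i • p.2 = p.2} → Prop :=
  fun p q => ∃ h : ↥H, (∀ i, τ i * h = h * τ i) ∧
    (p : G × X).1 = (q : G × X).1 * (h : G) ∧ (q : G × X).2 = h • (p : G × X).2

theorem balRel_equivalence (H : Subgroup G) (X : Type*) [MulAction ↥H X] :
    Equivalence (balRel H X) where
  refl p := ⟨1, by simp, by simp⟩
  symm := by
    rintro p q ⟨h, h1, h2⟩
    exact ⟨h⁻¹, by rw [h1]; simp [mul_assoc], by rw [h2]; simp⟩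
  trans := by
    rintro p q r ⟨h, h1, h2⟩ ⟨k, k1, k2⟩
    exact ⟨k * h, by rw [h1, k1]; simp [mul_assoc], by rw [k2, h2, mul_smul]⟩

theorem balRel_of_eq {H : Subgroup G} {X : Type*} [MulAction ↥H X] {p q : G × X}
    (hmem : Quot.mk (balRel H X) p = Quot.mk (balRel H X) q) :
    balRel H X p q :=
  ((balRel_equivalence H X).eqvGen_iff).mp (Quot.eqvGen_exact hmem)

end

/-- If `R ⊆ Hⁿ` contains exactly one representative of each `H`-conjugacy class of tuples
`τ` that are `G`-conjugate to `σ`, then there is a bijection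
`(G ×_H X)^σ ≃ ⨿_{τ ∈ R} C_G(τ) ×_{C_H(τ)} X^τ`. -/
theorem statement14 (G : Type*) [Group G] (H : Subgroup G)
    (X : Type*) [MulAction ↥H X] (n : ℕ)
    (σ : Fin n → G)
    (hc : ∀ i j, Commute (σ i) (σ j)) (hord : ∀ i, IsOfFinOrder (σ i))
    (R : Set (Fin n → ↥H))
    (hR1 : ∀ τ ∈ R, ∃ g : G, ∀ i, ((τ i : G)) = g * σ i * g⁻¹)
    (hR2 : ∀ τ : Fin n → ↥H, (∃ g : G, ∀ i, ((τ i : G)) = g * σ i * g⁻¹) →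
      ∃ τ' ∈ R, ∃ h : ↥H, ∀ i, τ i = h * τ' i * h⁻¹)
    (hR3 : ∀ τ ∈ R, ∀ τ' ∈ R, (∃ h : ↥H, ∀ i, τ i = h * τ' i * h⁻¹) → τ = τ') :
    Nonempty
      ({p : BalProd H X // ∀ i, gmul H X (σ i) p = p} ≃
        Σ τ : R, Quot (relCH H X (τ : Fin n → ↥H))) := by
  classical
  -- choose a base point `gB τ` for each `τ ∈ R`, with `σ i = gB τ * τ i * (gB τ)⁻¹`
  have hg : ∀ τ : R, ∃ g : G, ∀ i, σ i = g * ((τ : Fin n → ↥H) i : G) * g⁻¹ := by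
    rintro ⟨τ, hτ⟩
    obtain ⟨g, hgτ⟩ := hR1 τ hτ
    exact ⟨g⁻¹, fun i => by rw [hgτ i]; group⟩
  choose gB hgB using hg
  -- the image of the map is fixed by all `σ i`
  have fixedPf : ∀ (τ : R)
      (p : {p : G × X // p.1 ∈ CGsub H ((τ : Fin n → ↥H)) ∧
        ∀ i, (τ : Fin n → ↥H) i • p.2 = p.2}) (i : Fin n),
      gmul H X (σ i) (Quot.mk (balRel H X) (gB τ * p.1.1, p.1.2)) =
        Quot.mk (balRel H X) (gB τ * p.1.1, p.1.2) := by
    rintro τ ⟨⟨a, x⟩, hmem, hfix⟩ i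
    show Quot.mk (balRel H X) (σ i * (gB τ * a), x) = Quot.mk (balRel H X) (gB τ * a, x)
    apply Quot.sound
    refine ⟨(τ : Fin n → ↥H) i, ?_, (hfix i).symm⟩
    have hca : (((τ : Fin n → ↥H) i : G)) * a = a * (((τ : Fin n → ↥H) i : G)) :=
      Subgroup.mem_centralizer_iff.mp hmem _ ⟨i, rfl⟩
    rw [hgB τ i]
    calc gB τ * ((τ : Fin n → ↥H) i : G) * (gB τ)⁻¹ * (gB τ * a)
        = gB τ * (((τ : Fin n → ↥H) i : G) * a) := by group
      _ = gB τ * (a * ((τ : Fin n → ↥H) i : G)) := by rw [hca]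
      _ = gB τ * a * ((τ : Fin n → ↥H) i : G) := by group
  -- well-definedness on the quotient
  have wd : ∀ (τ : R) (p q : {p : G × X // p.1 ∈ CGsub H ((τ : Fin n → ↥H)) ∧
        ∀ i, (τ : Fin n → ↥H) i • p.2 = p.2}),
      relCH H X ((τ : Fin n → ↥H)) p q →
      Quot.mk (balRel H X) (gB τ * p.1.1, p.1.2) =
        Quot.mk (balRel H X) (gB τ * q.1.1, q.1.2) := by
    rintro τ p q ⟨h, hcomm, e1, e2⟩
    apply Quot.sound
    refine ⟨h, ?_, e2⟩
    show gB τ * (p : G × X).1 = gB τ * (q : G × X).1 * (h : G)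
    rw [e1, mul_assoc]
  refine ⟨(Equiv.ofBijective
    (fun s : (Σ τ : R, Quot (relCH H X ((τ : Fin n → ↥H)))) =>
      Quot.lift (fun p => (⟨Quot.mk (balRel H X) (gB s.1 * p.1.1, p.1.2), fixedPf s.1 p⟩ :
        {p : BalProd H X // ∀ i, gmul H X (σ i) p = p}))
        (fun p q hr => Subtype.ext (wd s.1 p q hr)) s.2)
    ⟨?_, ?_⟩).symm⟩
  · -- injectivity
    rintro ⟨τ, p⟩ ⟨τ', p'⟩ hpq
    induction p using Quot.ind with | _ p => ?_
    induction p' using Quot.ind with | _ p' => ?_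
    obtain ⟨⟨a, x⟩, hmem, hfix⟩ := p
    obtain ⟨⟨a', x'⟩, hmem', hfix'⟩ := p'
    have hval : Quot.mk (balRel H X) (gB τ * a, x) = Quot.mk (balRel H X) (gB τ' * a', x') :=
      congrArg Subtype.val hpq
    obtain ⟨h, e1, e2⟩ := balRel_of_eq hval
    have e1' : gB τ * a = gB τ' * a' * (h : G) := e1
    have e2' : x' = h • x := e2
    have key : ∀ i, (h : G) * ((τ : Fin n → ↥H) i : G) =
        ((τ' : Fin n → ↥H) i : G) * (h : G) := by
      intro i
      have hca : (((τ : Fin n → ↥H) i : G)) * a = a * (((τ : Fin n → ↥H) i : G)) :=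
        Subgroup.mem_centralizer_iff.mp hmem _ ⟨i, rfl⟩
      have hca' : (((τ' : Fin n → ↥H) i : G)) * a' = a' * (((τ' : Fin n → ↥H) i : G)) :=
        Subgroup.mem_centralizer_iff.mp hmem' _ ⟨i, rfl⟩
      have key0 : gB τ' * a' * ((h : G) * ((τ : Fin n → ↥H) i : G)) =
          gB τ' * a' * (((τ' : Fin n → ↥H) i : G) * (h : G)) := by
        calc gB τ' * a' * ((h : G) * ((τ : Fin n → ↥H) i : G))
            = gB τ' * a' * (h : G) * ((τ : Fin n → ↥H) i : G) := by group
          _ = gB τ * a * ((τ : Fin n → ↥H) i : G) := by rw [← e1']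
          _ = gB τ * (((τ : Fin n → ↥H) i : G) * a) := by rw [mul_assoc, ← hca]
          _ = gB τ * ((τ : Fin n → ↥H) i : G) * (gB τ)⁻¹ * (gB τ * a) := by group
          _ = σ i * (gB τ * a) := by rw [← hgB τ i]
          _ = σ i * (gB τ' * a' * (h : G)) := by rw [e1']
          _ = gB τ' * ((τ' : Fin n → ↥H) i : G) * (gB τ')⁻¹ * (gB τ' * a' * (h : G)) := by
              rw [← hgB τ' i]
          _ = gB τ' * (((τ' : Fin n → ↥H) i : G) * a') * (h : G) := by group
          _ = gB τ' * (a' * ((τ' : Fin n → ↥H) i : G)) * (h : G) := by rw [hca']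
          _ = gB τ' * a' * (((τ' : Fin n → ↥H) i : G) * (h : G)) := by group
      exact mul_left_cancel key0
    have τeq : τ = τ' := by
      apply Subtype.ext
      apply hR3 _ τ.2 _ τ'.2
      refine ⟨h⁻¹, fun i => ?_⟩
      apply Subtype.ext
      show ((τ : Fin n → ↥H) i : G) = ((h⁻¹ * (τ' : Fin n → ↥H) i * h⁻¹⁻¹ : ↥H) : G)
      push_cast
      rw [inv_inv, mul_assoc, ← key i]
      group
    subst τeq
    refine congrArg (Sigma.mk τ) ?_
    apply Quot.sound
    refine ⟨h, fun i => Subtype.ext (key i).symm, ?_, e2'⟩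
    show a = a' * (h : G)
    apply mul_left_cancel (a := gB τ)
    rw [e1', mul_assoc]
  · -- surjectivity
    rintro ⟨p, hp⟩
    induction p using Quot.ind with | _ p => ?_
    obtain ⟨g, x⟩ := p
    have hEx : ∀ i, ∃ h : ↥H, σ i * g = g * (h : G) ∧ x = h • x := by
      intro i
      have h0 : Quot.mk (balRel H X) (σ i * g, x) = Quot.mk (balRel H X) (g, x) := hp i
      exact balRel_of_eq h0
    choose t ht1 ht2 using hEx
    have hconj : ∃ g' : G, ∀ i, ((t i : G)) = g' * σ i * g'⁻¹ :=
      ⟨g⁻¹, fun i => by rw [inv_inv, mul_assoc, ht1 i, ← mul_assoc, inv_mul_cancel, one_mul]⟩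
    obtain ⟨τ', hτ'R, h, hth⟩ := hR2 t hconj
    set τR : R := ⟨τ', hτ'R⟩ with hτR
    have hthG : ∀ i, ((t i : G)) = (h : G) * (τ' i : G) * (h : G)⁻¹ := by
      intro i
      rw [hth i]
      push_cast
      rfl
    have memC : ((gB τR)⁻¹ * g * (h : G)) ∈ CGsub H τ' := by
      apply Subgroup.mem_centralizer_iff.mpr
      rintro y ⟨i, rfl⟩
      have hh1 : (h : G) * (τ' i : G) = (t i : G) * (h : G) := by rw [hthG i]; group
      have hh2 : g * ((t i : G)) = σ i * g := (ht1 i).symm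
      symm
      calc (gB τR)⁻¹ * g * (h : G) * (τ' i : G)
          = (gB τR)⁻¹ * g * ((h : G) * (τ' i : G)) := by group
        _ = (gB τR)⁻¹ * (g * (t i : G)) * (h : G) := by rw [hh1]; group
        _ = (gB τR)⁻¹ * (σ i * g) * (h : G) := by rw [hh2]
        _ = (gB τR)⁻¹ * (gB τR * (τ' i : G) * (gB τR)⁻¹ * g) * (h : G) := by rw [← hgB τR i]
        _ = (τ' i : G) * ((gB τR)⁻¹ * g * (h : G)) := by group
    have fixX : ∀ i, τ' i • (h⁻¹ • x) = h⁻¹ • x := by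
      intro i
      have hcomm : τ' i * h⁻¹ = h⁻¹ * t i := by rw [hth i]; group
      rw [← mul_smul, hcomm, mul_smul, ← ht2 i]
    refine ⟨⟨τR, Quot.mk _ ⟨((gB τR)⁻¹ * g * (h : G), h⁻¹ • x), memC, fixX⟩⟩, ?_⟩
    apply Subtype.ext
    show Quot.mk (balRel H X) (gB τR * ((gB τR)⁻¹ * g * (h : G)), h⁻¹ • x) =
      Quot.mk (balRel H X) (g, x)
    apply Quot.sound
    exact ⟨h, by group, by simp⟩
end
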